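/- Let ρ be a positive semidefinite Hermitian matrix indexed by a finite set Z that is partitioned into disjoint subsets X and Y (Z = X ∪ Y, X ∩ Y = ∅). Let R ⊆ X × Y be a relation, let ℓ : Z → ℝ_{>0}, and let L > 0. Assume: for every x ∈ X, |{y : (x,y) ∈ R}| ≤ ℓ(x); for every y ∈ Y, |{x : (x,y) ∈ R}| ≤ ℓ(y); and ℓ(x)·ℓ(y) ≤ L for every (x,y) ∈ R. Then ∑_{(x,y) ∈ R} |ρ_{xy}| ≤ (√L / 2)·tr(ρ). -/

import Mathlib

open Finset
open scoped ComplexOrder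

lemma diag_nonneg {Z : Type*} [Fintype Z] [DecidableEq Z]
    (ρ : Matrix Z Z ℂ) (hρ : ρ.PosSemidef) (z : Z) : 0 ≤ (ρ z z).re := by
  have := hρ.re_dotProduct_nonneg (Pi.single z 1)
  simpa [Matrix.mulVec_single, dotProduct, Pi.single_apply] using this

lemma key {Z : Type*} [Fintype Z] [DecidableEq Z]
    (ρ : Matrix Z Z ℂ) (hρ : ρ.PosSemidef) {x y : Z} (hxy : x ≠ y)
    {t : ℝ} (ht : 0 < t) :
    ‖ρ x y‖ ≤ (t * (ρ x x).re + t⁻¹ * (ρ y y).re) / 2 := by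
  set r : ℝ := ‖ρ x y‖ with hr
  by_cases h0 : ρ x y = 0
  · have h1 := diag_nonneg ρ hρ x
    have h2 := diag_nonneg ρ hρ y
    simp only [hr, h0, norm_zero]
    positivity
  · have hrpos : 0 < r := by simpa [hr] using norm_pos_iff.mpr h0
    set c : ℂ := -(starRingEnd ℂ (ρ x y)) / (r : ℂ) with hc
    set v : Z → ℂ := fun z => (if z = x then (t : ℂ) else 0) + (if z = y then c else 0) with hv
    have hS := hρ.re_dotProduct_nonneg v
    have hyx : ρ y x = starRingEnd ℂ (ρ x y) := by
      have := congrFun (congrFun hρ.1 y) x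
      simpa [Matrix.conjTranspose_apply] using this.symm
    have hval : dotProduct (star v) (ρ.mulVec v)
        = (starRingEnd ℂ (t:ℂ)) * (ρ x x * t + ρ x y * c)
          + (starRingEnd ℂ c) * (ρ y x * t + ρ y y * c) := by
      simp [hv, dotProduct, Matrix.mulVec, mul_add, add_mul, mul_ite, ite_mul,
        Finset.sum_add_distrib, Finset.sum_ite_eq', apply_ite (starRingEnd ℂ), hxy, hxy.symm]
      ring
    have hmc : (ρ x y) * starRingEnd ℂ (ρ x y) = (r:ℂ)^2 := by
      rw [Complex.mul_conj, ← Complex.sq_norm, hr]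
      push_cast
      ring
    have hS2 : dotProduct (star v) (ρ.mulVec v)
        = (t:ℂ)^2 * ρ x x + ρ y y - 2*t*r := by
      rw [hval, hyx, hc]
      have hrne : (r:ℂ) ≠ 0 := by exact_mod_cast hrpos.ne'
      simp only [map_neg, map_div₀, Complex.conj_conj, Complex.conj_ofReal]
      field_simp
      linear_combination (ρ y y - 2 * (t:ℂ) * r) * hmc
    rw [hS2] at hS
    have hre : ((t:ℂ)^2 * ρ x x + ρ y y - 2*t*r : ℂ).re
        = t^2 * (ρ x x).re + (ρ y y).re - 2*t*r := by
      simp [← Complex.ofReal_pow, Complex.sub_re, Complex.add_re, Complex.mul_re]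
    have hS3 : 0 ≤ t^2 * (ρ x x).re + (ρ y y).re - 2*t*r := by
      simpa [RCLike.re_to_complex, hre] using hS
    have h1 : r ≤ (t^2 * (ρ x x).re + (ρ y y).re) / (2*t) := by
      rw [le_div_iff₀ (by positivity)]
      nlinarith [hS3]
    have h2 : (t^2 * (ρ x x).re + (ρ y y).re) / (2*t)
        = (t * (ρ x x).re + t⁻¹ * (ρ y y).re) / 2 := by
      field_simp
    linarith [h1, h2.le, h2.ge]


/-- Summing the basic PSD entry bound over a relation: if `Z = X ⊔ Y`, `ρ` is
positive semidefinite, `R ⊆ X × Y`, the `R`-degrees are bounded by `ℓ`, and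
`ℓ(x)·ℓ(y) ≤ L` on `R`, then `∑_{(x,y)∈R} |ρ_{xy}| ≤ (√L/2)·tr ρ`. -/
theorem stmt_12 {Z : Type*} [Fintype Z] [DecidableEq Z]
    (X Y : Finset Z) (hXY : X ∪ Y = Finset.univ) (hdisj : X ∩ Y = ∅)
    (ρ : Matrix Z Z ℂ) (hρ : ρ.PosSemidef)
    (R : Finset (Z × Z)) (hR : ∀ p ∈ R, p.1 ∈ X ∧ p.2 ∈ Y)
    (ℓ : Z → ℝ) (hℓ : ∀ z, 0 < ℓ z) (L : ℝ) (hL : 0 < L)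
    (hdegX : ∀ x ∈ X, ((R.filter (fun p => p.1 = x)).card : ℝ) ≤ ℓ x)
    (hdegY : ∀ y ∈ Y, ((R.filter (fun p => p.2 = y)).card : ℝ) ≤ ℓ y)
    (hprod : ∀ p ∈ R, ℓ p.1 * ℓ p.2 ≤ L) :
    ∑ p ∈ R, ‖ρ p.1 p.2‖
      ≤ (Real.sqrt L / 2) * (Matrix.trace ρ).re := by
  set s : ℝ := Real.sqrt L with hs
  have hspos : 0 < s := Real.sqrt_pos.mpr hL
  have hdiag := diag_nonneg ρ hρ
  -- pointwise bound
  have hpt : ∀ p ∈ R, ‖ρ p.1 p.2‖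
      ≤ ((s / ℓ p.1) * (ρ p.1 p.1).re + (s / ℓ p.2) * (ρ p.2 p.2).re) / 2 := by
    intro p hp
    obtain ⟨hx, hy⟩ := hR p hp
    have hxy : p.1 ≠ p.2 := by
      intro h
      have : p.1 ∈ X ∩ Y := Finset.mem_inter.mpr ⟨hx, h ▸ hy⟩
      simp [hdisj] at this
    have ht : 0 < s / ℓ p.1 := div_pos hspos (hℓ _)
    refine (key ρ hρ hxy ht).trans ?_
    have hinv : (s / ℓ p.1)⁻¹ * (ρ p.2 p.2).re ≤ (s / ℓ p.2) * (ρ p.2 p.2).re := by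
      apply mul_le_mul_of_nonneg_right _ (hdiag _)
      rw [inv_div, div_le_div_iff₀ (hspos) (hℓ _)]
      have h2 : s * s = L := Real.mul_self_sqrt hL.le
      have := hprod p hp
      linarith
    linarith
  refine (Finset.sum_le_sum hpt).trans ?_
  -- split into two sums
  have hsplit : ∑ p ∈ R, ((s / ℓ p.1) * (ρ p.1 p.1).re + (s / ℓ p.2) * (ρ p.2 p.2).re) / 2
      = (∑ p ∈ R, (s / ℓ p.1) * (ρ p.1 p.1).re) / 2
        + (∑ p ∈ R, (s / ℓ p.2) * (ρ p.2 p.2).re) / 2 := by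
    simp [add_div, Finset.sum_add_distrib, Finset.sum_div]
  rw [hsplit]
  -- first sum
  have hb1 : ∑ p ∈ R, (s / ℓ p.1) * (ρ p.1 p.1).re ≤ s * ∑ x ∈ X, (ρ x x).re := by
    rw [← Finset.sum_fiberwise_of_maps_to (fun p hp => (hR p hp).1)
      (fun p => (s / ℓ p.1) * (ρ p.1 p.1).re), Finset.mul_sum]
    refine Finset.sum_le_sum fun x hx => ?_
    have : ∑ p ∈ R.filter (fun p => p.1 = x), (s / ℓ p.1) * (ρ p.1 p.1).re
        = ((R.filter (fun p => p.1 = x)).card : ℝ) * ((s / ℓ x) * (ρ x x).re) := by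
      rw [Finset.sum_congr rfl (fun p hp => by rw [(Finset.mem_filter.mp hp).2]),
        Finset.sum_const, nsmul_eq_mul]
    rw [this]
    calc ((R.filter (fun p => p.1 = x)).card : ℝ) * ((s / ℓ x) * (ρ x x).re)
        ≤ ℓ x * ((s / ℓ x) * (ρ x x).re) := by
          exact mul_le_mul_of_nonneg_right (hdegX x hx)
            (mul_nonneg (div_nonneg hspos.le (hℓ x).le) (hdiag x))
      _ = s * (ρ x x).re := by field_simp [(hℓ x).ne']
  have hb2 : ∑ p ∈ R, (s / ℓ p.2) * (ρ p.2 p.2).re ≤ s * ∑ y ∈ Y, (ρ y y).re := by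
    rw [← Finset.sum_fiberwise_of_maps_to (fun p hp => (hR p hp).2)
      (fun p => (s / ℓ p.2) * (ρ p.2 p.2).re), Finset.mul_sum]
    refine Finset.sum_le_sum fun y hy => ?_
    have : ∑ p ∈ R.filter (fun p => p.2 = y), (s / ℓ p.2) * (ρ p.2 p.2).re
        = ((R.filter (fun p => p.2 = y)).card : ℝ) * ((s / ℓ y) * (ρ y y).re) := by
      rw [Finset.sum_congr rfl (fun p hp => by rw [(Finset.mem_filter.mp hp).2]),
        Finset.sum_const, nsmul_eq_mul]
    rw [this]
    calc ((R.filter (fun p => p.2 = y)).card : ℝ) * ((s / ℓ y) * (ρ y y).re)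
        ≤ ℓ y * ((s / ℓ y) * (ρ y y).re) := by
          exact mul_le_mul_of_nonneg_right (hdegY y hy)
            (mul_nonneg (div_nonneg hspos.le (hℓ y).le) (hdiag y))
      _ = s * (ρ y y).re := by field_simp [(hℓ y).ne']
  -- combine
  have htr : (Matrix.trace ρ).re = ∑ x ∈ X, (ρ x x).re + ∑ y ∈ Y, (ρ y y).re := by
    have hd : Disjoint X Y := Finset.disjoint_iff_inter_eq_empty.mpr hdisj
    rw [← Finset.sum_union hd, hXY, Matrix.trace, Complex.re_sum]
    rfl
  rw [htr]
  linarith [hb1, hb2]
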